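/- Let S be a cancellative left Ore monoid acting on the right on a compact Hausdorff space K by continuous self-maps ρ_s. Then the surjective core E(ρ) = ⋂_{t∈S} ρ_t(K) is a closed subset of K, and ρ_s(E(ρ)) = E(ρ) for every s ∈ S. -/
import Mathlib


/-- Let `S` be a cancellative left Ore monoid acting on the right on a compact Hausdorff space
`K` by continuous self-maps `ρ_s` (a monoid anti-homomorphism). Then the surjective core
`E(ρ) = ⋂_{t ∈ S} ρ_t(K)` is closed in `K`, and `ρ_s(E(ρ)) = E(ρ)` for every `s ∈ S`. -/
theorem stmt8 {S K : Type*} [CancelMonoid S] [TopologicalSpace K] [CompactSpace K] [T2Space K]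
    (hOre : ∀ s t : S, ∃ a b : S, a * s = b * t)
    (ρ : S → C(K, K)) (hρ1 : ρ 1 = ContinuousMap.id K)
    (hρmul : ∀ s t : S, ρ (s * t) = (ρ t).comp (ρ s)) :
    IsClosed (⋂ t : S, Set.range (ρ t)) ∧
      ∀ s : S, (ρ s) '' (⋂ t : S, Set.range (ρ t)) = ⋂ t : S, Set.range (ρ t) := by
  have hclosed : ∀ t : S, IsClosed (Set.range (ρ t)) := fun t =>
    (isCompact_range (ρ t).continuous).isClosed
  have hrange : ∀ a t : S, Set.range (ρ (a * t)) ⊆ Set.range (ρ t) := by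
    intro a t x hx
    obtain ⟨y, rfl⟩ := hx
    rw [hρmul]
    exact ⟨ρ a y, rfl⟩
  refine ⟨isClosed_iInter fun t => hclosed t, fun s => ?_⟩
  apply Set.Subset.antisymm
  · rintro _ ⟨x, hx, rfl⟩
    rw [Set.mem_iInter]
    intro t
    obtain ⟨a, b, hab⟩ := hOre s t
    have hxa : x ∈ Set.range (ρ a) := Set.mem_iInter.mp hx a
    obtain ⟨y, rfl⟩ := hxa
    have : ρ s (ρ a y) = ρ (a * s) y := by rw [hρmul]; rfl
    rw [this, hab]
    exact hrange b t ⟨y, rfl⟩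
  · intro x hx
    -- find z with ρ s z = x and z ∈ all ranges
    set A : S → Set K := fun t => ρ s ⁻¹' {x} ∩ Set.range (ρ t) with hA
    have hAne : ∀ t, (A t).Nonempty := by
      intro t
      have : x ∈ Set.range (ρ (t * s)) := Set.mem_iInter.mp hx (t * s)
      obtain ⟨y, hy⟩ := this
      rw [hρmul] at hy
      exact ⟨ρ t y, by simpa using hy, y, rfl⟩
    have hAcl : ∀ t, IsClosed (A t) :=
      fun t => (IsClosed.preimage (ρ s).continuous isClosed_singleton).inter (hclosed t)
    have hAcp : ∀ t, IsCompact (A t) := fun t => (hAcl t).isCompact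
    have hdir : Directed (· ⊇ ·) A := by
      intro t₁ t₂
      obtain ⟨a, b, hab⟩ := hOre t₁ t₂
      refine ⟨a * t₁, ?_, ?_⟩
      · exact Set.inter_subset_inter_right _ (hrange a t₁)
      · rw [hab]
        exact Set.inter_subset_inter_right _ (hrange b t₂)
    obtain ⟨z, hz⟩ := IsCompact.nonempty_iInter_of_directed_nonempty_isCompact_isClosed
      A hdir hAne hAcp hAcl
    have hz' : ∀ t, z ∈ A t := Set.mem_iInter.mp hz
    refine ⟨z, Set.mem_iInter.mpr fun t => (hz' t).2, ?_⟩
    have := (hz' 1).1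
    simpa using this
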